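/- Let n ≥ s ≥ 1 be integers. For all x, y ∈ ℂ^{n²} with supp(x) = supp(y) = Λ, |Λ| ≤ s, and ‖x‖₂ = ‖y‖₂ = 1, it holds that d₁(x,y) = ‖B(x) − B(y)‖_{2→2} ≤ 2s · ‖x − y‖₂. -/

import Mathlib

open MeasureTheory ProbabilityTheory Matrix

noncomputable section

/-- Cyclic translation on `ℂⁿ`: `(T h) q = h (q-1)`. -/
def Tmat (n : ℕ) : Matrix (Fin n) (Fin n) ℂ :=
  fun q j => if (j : ℕ) = ((q : ℕ) + (n - 1)) % n then 1 else 0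

/-- Modulation on `ℂⁿ`: `(M h) q = exp(2πiq/n) h q`. -/
def Mmat (n : ℕ) : Matrix (Fin n) (Fin n) ℂ :=
  Matrix.diagonal fun q => Complex.exp (2 * Real.pi * Complex.I * (q : ℕ) / n)

/-- Time-frequency shift `π(λ) = M^ℓ T^k` for `λ = (k, ℓ)`. -/
def pimat (n : ℕ) (lam : Fin n × Fin n) : Matrix (Fin n) (Fin n) ℂ :=
  Mmat n ^ (lam.2 : ℕ) * Tmat n ^ (lam.1 : ℕ)

/-- The matrix `A_q = (T^q | M T^q | ⋯ | M^{n-1} T^q)`: its column `λ = (k,ℓ)` is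
the `k`-th column of `M^ℓ T^q`. -/
def Amat (n : ℕ) (q : Fin n) : Matrix (Fin n) (Fin n × Fin n) ℂ :=
  fun r lam => (Mmat n ^ (lam.2 : ℕ) * Tmat n ^ (q : ℕ)) r lam.1

/-- The matrix `W_{q',q} = A_{q'}^* A_q` for `q' ≠ q`, and `0` for `q' = q`. -/
def Wmat (n : ℕ) (q' q : Fin n) : Matrix (Fin n × Fin n) (Fin n × Fin n) ℂ :=
  if q' = q then 0 else (Amat n q')ᴴ * Amat n q

/-- The matrix `B(x)` with entries `B(x)_{q',q} = x^* W_{q',q} x`. -/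
def Bmat (n : ℕ) (x : Fin n × Fin n → ℂ) : Matrix (Fin n) (Fin n) ℂ :=
  fun q' q => star x ⬝ᵥ (Wmat n q' q).mulVec x

/-- Euclidean (`ℓ₂`) norm of a finitely supported complex vector. -/
def euclNorm {ι : Type*} [Fintype ι] (x : ι → ℂ) : ℝ :=
  Real.sqrt (∑ i, ‖x i‖ ^ 2)

/-- Frobenius norm of a matrix. -/
def frobNorm {ι κ : Type*} [Fintype ι] [Fintype κ] (A : Matrix ι κ ℂ) : ℝ :=
  Real.sqrt (∑ i, ∑ j, ‖A i j‖ ^ 2)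

/-- Operator (`ℓ₂ → ℓ₂`) norm of a matrix. -/
def opNorm {ι κ : Type*} [Fintype ι] [Fintype κ] (A : Matrix ι κ ℂ) : ℝ :=
  sSup {c : ℝ | ∃ x : κ → ℂ, euclNorm x ≤ 1 ∧ c = euclNorm (A.mulVec x)}

open scoped Classical in
/-- Number of nonzero entries of a vector. -/
def sparsity {ι : Type*} [Fintype ι] (x : ι → ℂ) : ℕ :=
  (Finset.univ.filter fun j => x j ≠ 0).card

/-- `T_s`: unit-norm `s`-sparse vectors in `ℂ^{n²}`. -/
def sparseSphere (n s : ℕ) : Set (Fin n × Fin n → ℂ) :=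
  {x | euclNorm x = 1 ∧ sparsity x ≤ s}

/-- Covering number: minimal cardinality of a subset `S ⊆ T` such that every point of `T`
is within distance `u` (w.r.t. `d`) of a point of `S`. -/
def coveringNumber {α : Type*} (T : Set α) (d : α → α → ℝ) (u : ℝ) : ℝ :=
  sInf {N : ℝ | ∃ S : Finset α, ↑S ⊆ T ∧ (∀ x ∈ T, ∃ y ∈ S, d x y ≤ u) ∧ N = S.card}

/-- Restricted isometry constant of order `s` of the matrix `A`. -/
def ripConst {ι κ : Type*} [Fintype ι] [Fintype κ] (A : Matrix ι κ ℂ) (s : ℕ) : ℝ :=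
  sInf {δ : ℝ | 0 ≤ δ ∧ ∀ x : κ → ℂ, sparsity x ≤ s →
    (1 - δ) * euclNorm x ^ 2 ≤ euclNorm (A.mulVec x) ^ 2 ∧
      euclNorm (A.mulVec x) ^ 2 ≤ (1 + δ) * euclNorm x ^ 2}

/-- Gabor synthesis matrix: the column indexed by `λ` is `π(λ) g`. -/
def gaborMatrix (n : ℕ) (g : Fin n → ℂ) : Matrix (Fin n) (Fin n × Fin n) ℂ :=
  fun r lam => (pimat n lam).mulVec g r

/-- The Rademacher distribution on `ℂ`: values `±1` with probability `1/2` each. -/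
def rademacherMeasure : Measure ℂ :=
  (2 : ENNReal)⁻¹ • (Measure.dirac 1 + Measure.dirac (-1))

/-- The Steinhaus distribution: uniform distribution on the complex unit circle. -/
def steinhausMeasure : Measure ℂ :=
  Measure.map (fun t : ℝ => Complex.exp (2 * Real.pi * t * Complex.I))
    (volume.restrict (Set.Ioc (0 : ℝ) 1))

/-- `ε` is a Rademacher sequence: independent entries, each `±1` with probability 1/2. -/
def IsRademacherVec {Ω : Type*} [MeasurableSpace Ω] (μ : Measure Ω) {n : ℕ}
    (ε : Ω → Fin n → ℂ) : Prop :=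
  iIndepFun (fun q ω => ε ω q) μ ∧
    ∀ q, μ.map (fun ω => ε ω q) = rademacherMeasure

/-- `ε` is a Steinhaus sequence: independent entries, each uniform on the unit circle. -/
def IsSteinhausVec {Ω : Type*} [MeasurableSpace Ω] (μ : Measure Ω) {n : ℕ}
    (ε : Ω → Fin n → ℂ) : Prop :=
  iIndepFun (fun q ω => ε ω q) μ ∧
    ∀ q, μ.map (fun ω => ε ω q) = steinhausMeasure

end



section Aux

lemma Tpow (n : ℕ) (hn : 0 < n) (m : ℕ) (r j : Fin n) :
    (Tmat n ^ m) r j = if (j : ℕ) = ((r : ℕ) + m * (n - 1)) % n then 1 else 0 := by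
  induction m generalizing j with
  | zero =>
    simp only [pow_zero, Matrix.one_apply, Nat.zero_mul, Nat.add_zero,
      Nat.mod_eq_of_lt r.isLt]
    by_cases h : r = j
    · simp [h]
    · rw [if_neg h, if_neg]
      exact fun hc => h (Fin.ext hc.symm)
  | succ m ih =>
    rw [pow_succ, Matrix.mul_apply]
    set j₀ : Fin n := ⟨((r : ℕ) + m * (n - 1)) % n, Nat.mod_lt _ hn⟩ with hj₀
    rw [Finset.sum_eq_single j₀]
    · rw [ih, Tmat]
      simp only [hj₀, if_pos rfl, one_mul]
      rw [Nat.mod_add_mod, Nat.add_assoc, ← Nat.succ_mul]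
      simp
    · intro b _ hb
      rw [ih, if_neg, zero_mul]
      intro hc
      exact hb (Fin.ext hc)
    · intro h; exact absurd (Finset.mem_univ j₀) h

lemma Amat_apply (n : ℕ) (hn : 0 < n) (q r : Fin n) (lam : Fin n × Fin n) :
    Amat n q r lam = Complex.exp (2 * Real.pi * Complex.I * (r : ℕ) / n) ^ (lam.2 : ℕ) *
      if (lam.1 : ℕ) = ((r : ℕ) + (q : ℕ) * (n - 1)) % n then 1 else 0 := by
  rw [Amat, Mmat, Matrix.diagonal_pow, Matrix.diagonal_mul, Tpow n hn]
  simp [Pi.pow_apply]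

lemma AhA_apply (n : ℕ) (hn : 0 < n) (q' q : Fin n) (l' l : Fin n × Fin n) :
    ((Amat n q')ᴴ * Amat n q) l' l =
      (starRingEnd ℂ) (Complex.exp (2 * Real.pi * Complex.I * ((((l.1 : ℕ) + (q : ℕ)) % n : ℕ) : ℂ) / n) ^ ((l'.2 : ℕ))) *
        Complex.exp (2 * Real.pi * Complex.I * ((((l.1 : ℕ) + (q : ℕ)) % n : ℕ) : ℂ) / n) ^ ((l.2 : ℕ)) *
        if (l'.1 : ℕ) = (((l.1 : ℕ) + (q : ℕ)) % n + (q' : ℕ) * (n - 1)) % n then 1 else 0 := by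
  have hmul : ∀ a : Fin n, (a : ℕ) * (n - 1) + (a : ℕ) = (a : ℕ) * n := by
    intro a
    rw [← Nat.mul_succ, Nat.succ_eq_add_one, Nat.sub_add_cancel hn]
  have hlt : ((l.1 : ℕ) + (q : ℕ)) % n < n := Nat.mod_lt _ hn
  have hval : ((⟨((l.1 : ℕ) + (q : ℕ)) % n, hlt⟩ : Fin n) : ℕ) = ((l.1 : ℕ) + (q : ℕ)) % n := rfl
  rw [Matrix.mul_apply]
  rw [Finset.sum_eq_single (⟨((l.1 : ℕ) + (q : ℕ)) % n, hlt⟩ : Fin n)]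
  · rw [Matrix.conjTranspose_apply, Amat_apply n hn, Amat_apply n hn]
    have hind : (l.1 : ℕ) = (((l.1 : ℕ) + (q : ℕ)) % n + (q : ℕ) * (n - 1)) % n := by
      rw [Nat.mod_add_mod, Nat.add_assoc, Nat.add_comm (q : ℕ), hmul q,
        Nat.add_mul_mod_self_right, Nat.mod_eq_of_lt l.1.isLt]
    rw [hval, if_pos hind, mul_one, star_mul']
    by_cases hC : (l'.1 : ℕ) = (((l.1 : ℕ) + (q : ℕ)) % n + (q' : ℕ) * (n - 1)) % n
    · rw [if_pos hC, star_one, mul_one, starRingEnd_apply, star_pow]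
      ring
    · rw [if_neg hC, star_zero, mul_zero, zero_mul, mul_zero]
  · intro r _ hr
    rw [Matrix.conjTranspose_apply, Amat_apply n hn, Amat_apply n hn]
    by_cases hc : (l.1 : ℕ) = ((r : ℕ) + (q : ℕ) * (n - 1)) % n
    · exfalso
      apply hr
      apply Fin.ext
      rw [hval, hc, Nat.mod_add_mod, Nat.add_assoc, hmul q, Nat.add_mul_mod_self_right,
        Nat.mod_eq_of_lt r.isLt]
    · rw [if_neg hc, mul_zero, mul_zero]
  · intro h
    exact absurd (Finset.mem_univ _) h

lemma exp_norm_one (n c : ℕ) : ‖Complex.exp (2 * Real.pi * Complex.I * (c : ℂ) / n)‖ = 1 := by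
  have h : (2 * Real.pi * Complex.I * (c : ℂ) / n) = ((2 * Real.pi * c / n : ℝ) : ℂ) * Complex.I := by
    push_cast; ring
  rw [h, Complex.norm_exp_ofReal_mul_I]

lemma W_norm_le (n : ℕ) (hn : 0 < n) (q' q : Fin n) (l' l : Fin n × Fin n) :
    ‖Wmat n q' q l' l‖ ≤ 1 := by
  rw [Wmat]
  split_ifs with h
  · simp
  · rw [AhA_apply n hn, norm_mul, norm_mul, RCLike.norm_conj, norm_pow, norm_pow,
      exp_norm_one, one_pow, one_pow, one_mul, one_mul]
    split_ifs <;> simp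

lemma W_eq_zero (n : ℕ) (hn : 0 < n) (q' q : Fin n) (l' l : Fin n × Fin n)
    (h : q + l.1 ≠ q' + l'.1) : Wmat n q' q l' l = 0 := by
  rw [Wmat]
  split_ifs with hq
  · simp
  · rw [AhA_apply n hn, if_neg, mul_zero]
    intro hc
    apply h
    apply Fin.ext
    rw [Fin.val_add, Fin.val_add, hc]
    have hmul : (q' : ℕ) * (n - 1) + (q' : ℕ) = (q' : ℕ) * n := by
      rw [← Nat.mul_succ, Nat.succ_eq_add_one, Nat.sub_add_cancel hn]
    conv_rhs => rw [Nat.add_comm ((q' : ℕ))]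
    rw [Nat.mod_add_mod, Nat.add_assoc, hmul, Nat.add_mul_mod_self_right]
    rw [Nat.mod_mod_of_dvd _ dvd_rfl, Nat.add_comm]

lemma euclNorm_eq {ι : Type*} [Fintype ι] (x : ι → ℂ) :
    euclNorm x = ‖(WithLp.equiv 2 (ι → ℂ)).symm x‖ := by
  rw [EuclideanSpace.norm_eq]
  rfl

lemma euclNorm_nonneg {ι : Type*} [Fintype ι] (x : ι → ℂ) : 0 ≤ euclNorm x :=
  Real.sqrt_nonneg _

lemma euclNorm_sum_le {α ι : Type*} [Fintype ι] (s : Finset α) (g : α → ι → ℂ) :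
    euclNorm (∑ a ∈ s, g a) ≤ ∑ a ∈ s, euclNorm (g a) := by
  simp only [euclNorm_eq]
  rw [show (WithLp.equiv 2 (ι → ℂ)).symm (∑ a ∈ s, g a) = ∑ a ∈ s, (WithLp.equiv 2 (ι → ℂ)).symm (g a) from
    map_sum (WithLp.linearEquiv 2 ℂ (ι → ℂ)).symm _ _]
  exact norm_sum_le s _

lemma euclNorm_smul {ι : Type*} [Fintype ι] (c : ℂ) (x : ι → ℂ) :
    euclNorm (c • x) = ‖c‖ * euclNorm x := by
  simp only [euclNorm_eq]
  exact norm_smul c _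

lemma mulVec_sum {α ι κ : Type*} [Fintype κ] (s : Finset α) (M : α → Matrix ι κ ℂ) (v : κ → ℂ) :
    (∑ a ∈ s, M a).mulVec v = ∑ a ∈ s, (M a).mulVec v := by
  ext i
  simp only [Matrix.mulVec, dotProduct, Finset.sum_apply, Matrix.sum_apply,
    Finset.sum_mul]
  rw [Finset.sum_comm]

lemma euclNorm_mulVec_perm {n : ℕ} (D : Matrix (Fin n) (Fin n) ℂ) (f : Fin n ≃ Fin n)
    (h0 : ∀ q' q, q ≠ f q' → D q' q = 0) (h1 : ∀ q', ‖D q' (f q')‖ ≤ 1) (v : Fin n → ℂ) :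
    euclNorm (D.mulVec v) ≤ euclNorm v := by
  rw [euclNorm, euclNorm]
  apply Real.sqrt_le_sqrt
  calc ∑ q', ‖D.mulVec v q'‖ ^ 2 = ∑ q', ‖D q' (f q') * v (f q')‖ ^ 2 := by
        apply Finset.sum_congr rfl
        intro q' _
        congr 2
        rw [Matrix.mulVec, dotProduct]
        rw [Finset.sum_eq_single (f q')]
        · intro b _ hb
          rw [h0 q' b hb, zero_mul]
        · intro h; exact absurd (Finset.mem_univ _) h
    _ ≤ ∑ q', ‖v (f q')‖ ^ 2 := by
        apply Finset.sum_le_sum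
        intro q' _
        rw [norm_mul, mul_pow]
        apply mul_le_of_le_one_left (by positivity)
        exact pow_le_one₀ (norm_nonneg _) (h1 q')
    _ = ∑ q, ‖v q‖ ^ 2 := by rw [← Equiv.sum_comp f (fun q => ‖v q‖ ^ 2)]

lemma opNorm_le_of_bound {ι κ : Type*} [Fintype ι] [Fintype κ] (A : Matrix ι κ ℂ) (M : ℝ)
    (hM : 0 ≤ M) (h : ∀ v, euclNorm v ≤ 1 → euclNorm (A.mulVec v) ≤ M) : opNorm A ≤ M := by
  apply Real.sSup_le _ hM
  rintro c ⟨v, hv, rfl⟩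
  exact h v hv

lemma l1_le_sqrt_card {ι : Type*} [Fintype ι] (s : Finset ι) (x : ι → ℂ) :
    ∑ i ∈ s, ‖x i‖ ≤ Real.sqrt s.card * euclNorm x := by
  rw [euclNorm, ← Real.sqrt_mul (by positivity)]
  rw [Real.le_sqrt (by positivity)]
  have h := Finset.sum_mul_sq_le_sq_mul_sq s (fun _ => (1 : ℝ)) (fun i => ‖x i‖)
  simp only [one_mul, one_pow, Finset.sum_const, nsmul_eq_mul, mul_one] at h
  calc (∑ i ∈ s, ‖x i‖) ^ 2 ≤ (s.card : ℝ) * ∑ i ∈ s, ‖x i‖ ^ 2 := h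
    _ ≤ (s.card : ℝ) * ∑ i, ‖x i‖ ^ 2 := by
        apply mul_le_mul_of_nonneg_left _ (by positivity)
        apply Finset.sum_le_sum_of_subset_of_nonneg (Finset.subset_univ s)
        intro i _ _
        positivity
  positivity

end Aux

/-- `d₁(x,y) ≤ 2 s ‖x-y‖₂` for unit-norm vectors with common support of size at most `s`. -/
theorem d1_lipschitz (n s : ℕ) (hs : 1 ≤ s) (hsn : s ≤ n) (x y : Fin n × Fin n → ℂ)
    (hsupp : Function.support x = Function.support y) (hcard : sparsity x ≤ s)
    (hx : euclNorm x = 1) (hy : euclNorm y = 1) :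
    opNorm (Bmat n x - Bmat n y) ≤ 2 * s * euclNorm (x - y) := by
  classical
  have hn : 0 < n := lt_of_lt_of_le hs hsn
  haveI : NeZero n := ⟨hn.ne'⟩
  set u : (Fin n × Fin n) → ℂ := x - y with hu
  set c : (Fin n × Fin n) × (Fin n × Fin n) → ℂ :=
    fun p => (starRingEnd ℂ) (x p.1) * x p.2 - (starRingEnd ℂ) (y p.1) * y p.2 with hc
  set Dmat : (Fin n × Fin n) × (Fin n × Fin n) → Matrix (Fin n) (Fin n) ℂ :=
    fun p => Matrix.of fun q' q => Wmat n q' q p.1 p.2 with hD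
  -- support set
  set S : Finset (Fin n × Fin n) := Finset.univ.filter (fun j => x j ≠ 0) with hSdef
  have hScard : (S.card : ℝ) ≤ (s : ℝ) := by
    have : S.card ≤ s := by
      refine le_trans (le_of_eq ?_) hcard
      rw [sparsity]
    exact_mod_cast this
  have hy0 : ∀ l : (Fin n × Fin n), x l = 0 → y l = 0 := by
    intro l hx0
    by_contra hy0
    have : l ∈ Function.support y := hy0
    rw [← hsupp] at this
    exact this hx0
  -- decomposition of Bmat n x - Bmat n y
  have hexpand : ∀ (q' q : Fin n) (z : (Fin n × Fin n) → ℂ),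
      star z ⬝ᵥ (Wmat n q' q).mulVec z =
        ∑ l' : (Fin n × Fin n), ∑ l : (Fin n × Fin n), (starRingEnd ℂ) (z l') * z l * Wmat n q' q l' l := by
    intro q' q z
    simp only [dotProduct, Matrix.mulVec, Pi.star_apply, Finset.mul_sum]
    refine Finset.sum_congr rfl fun l' _ => Finset.sum_congr rfl fun l _ => ?_
    simp only [starRingEnd_apply]
    ring
  have hdecomp : Bmat n x - Bmat n y = ∑ p : (Fin n × Fin n) × (Fin n × Fin n), c p • Dmat p := by
    ext q' q
    rw [Matrix.sub_apply, Matrix.sum_apply, Bmat, Bmat, hexpand, hexpand,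
      ← Finset.sum_sub_distrib]
    rw [Fintype.sum_prod_type (f := fun p => (c p • Dmat p) q' q)]
    refine Finset.sum_congr rfl fun l' _ => ?_
    rw [← Finset.sum_sub_distrib]
    refine Finset.sum_congr rfl fun l _ => ?_
    simp only [hc, hD, Matrix.smul_apply, Matrix.of_apply, smul_eq_mul]
    ring
  -- each Dmat p is a sub-permutation matrix
  have hperm : ∀ (p : (Fin n × Fin n) × (Fin n × Fin n)) (v : Fin n → ℂ),
      euclNorm ((Dmat p).mulVec v) ≤ euclNorm v := by
    intro p v
    apply euclNorm_mulVec_perm (Dmat p) (Equiv.addRight (p.1.1 - p.2.1))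
    · intro q' q hq
      show Wmat n q' q p.1 p.2 = 0
      apply W_eq_zero n hn
      intro hq2
      apply hq
      rw [Equiv.coe_addRight]
      show q = q' + (p.1.1 - p.2.1)
      rw [← add_sub_assoc, ← hq2, add_sub_cancel_right]
    · intro q'
      exact W_norm_le n hn _ _ _ _
  -- ℓ¹ bound on coefficients
  have hxS : ∑ i ∈ S, ‖x i‖ ≤ Real.sqrt s := by
    calc ∑ i ∈ S, ‖x i‖ ≤ Real.sqrt S.card * euclNorm x := l1_le_sqrt_card S x
      _ ≤ Real.sqrt s * 1 := by
          rw [hx]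
          exact mul_le_mul_of_nonneg_right (Real.sqrt_le_sqrt hScard) (by norm_num)
      _ = Real.sqrt s := mul_one _
  have hyS : ∑ i ∈ S, ‖y i‖ ≤ Real.sqrt s := by
    calc ∑ i ∈ S, ‖y i‖ ≤ Real.sqrt S.card * euclNorm y := l1_le_sqrt_card S y
      _ ≤ Real.sqrt s * 1 := by
          rw [hy]
          exact mul_le_mul_of_nonneg_right (Real.sqrt_le_sqrt hScard) (by norm_num)
      _ = Real.sqrt s := mul_one _
  have huS : ∑ i ∈ S, ‖u i‖ ≤ Real.sqrt s * euclNorm u := by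
    calc ∑ i ∈ S, ‖u i‖ ≤ Real.sqrt S.card * euclNorm u := l1_le_sqrt_card S u
      _ ≤ Real.sqrt s * euclNorm u :=
          mul_le_mul_of_nonneg_right (Real.sqrt_le_sqrt hScard) (euclNorm_nonneg u)
  have huS_nonneg : 0 ≤ ∑ i ∈ S, ‖u i‖ := Finset.sum_nonneg fun i _ => norm_nonneg _
  have key : ∑ p : (Fin n × Fin n) × (Fin n × Fin n), ‖c p‖ ≤ 2 * s * euclNorm u := by
    have hzero : ∀ p ∈ Finset.univ, p ∉ S ×ˢ S → ‖c p‖ = 0 := by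
      intro p _ hp
      rw [Finset.mem_product] at hp
      push_neg at hp
      have : x p.1 = 0 ∨ x p.2 = 0 := by
        by_cases h1 : p.1 ∈ S
        · right
          have := hp h1
          simpa [hSdef] using this
        · left
          simpa [hSdef] using h1
      rcases this with h | h
      · simp [hc, h, hy0 _ h]
      · simp [hc, h, hy0 _ h]
    rw [← Finset.sum_subset (Finset.subset_univ (S ×ˢ S)) hzero]
    have hbound : ∀ p ∈ S ×ˢ S,
        ‖c p‖ ≤ ‖x p.1‖ * ‖u p.2‖ + ‖u p.1‖ * ‖y p.2‖ := by
      intro p _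
      have hrw : c p = (starRingEnd ℂ) (x p.1) * u p.2 + (starRingEnd ℂ) (u p.1) * y p.2 := by
        simp only [hc, hu, Pi.sub_apply, map_sub]
        ring
      rw [hrw]
      calc ‖(starRingEnd ℂ) (x p.1) * u p.2 + (starRingEnd ℂ) (u p.1) * y p.2‖
          ≤ ‖(starRingEnd ℂ) (x p.1) * u p.2‖ + ‖(starRingEnd ℂ) (u p.1) * y p.2‖ :=
            norm_add_le _ _
        _ = ‖x p.1‖ * ‖u p.2‖ + ‖u p.1‖ * ‖y p.2‖ := by
            rw [norm_mul, norm_mul, RCLike.norm_conj, RCLike.norm_conj]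
    calc ∑ p ∈ S ×ˢ S, ‖c p‖
        ≤ ∑ p ∈ S ×ˢ S, (‖x p.1‖ * ‖u p.2‖ + ‖u p.1‖ * ‖y p.2‖) :=
          Finset.sum_le_sum hbound
      _ = (∑ i ∈ S, ‖x i‖) * (∑ i ∈ S, ‖u i‖) + (∑ i ∈ S, ‖u i‖) * (∑ i ∈ S, ‖y i‖) := by
          simp only [Finset.sum_product, Finset.sum_add_distrib, Finset.sum_mul_sum]
      _ ≤ Real.sqrt s * (Real.sqrt s * euclNorm u) + (Real.sqrt s * euclNorm u) * Real.sqrt s := by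
          apply add_le_add
          · apply mul_le_mul hxS huS huS_nonneg (Real.sqrt_nonneg _)
          · exact mul_le_mul huS hyS (Finset.sum_nonneg fun i _ => norm_nonneg _)
              (mul_nonneg (Real.sqrt_nonneg _) (euclNorm_nonneg _))
      _ = 2 * (Real.sqrt s * Real.sqrt s) * euclNorm u := by ring
      _ = 2 * s * euclNorm u := by
          rw [Real.mul_self_sqrt (Nat.cast_nonneg s)]
  -- conclusion
  rw [hdecomp]
  apply opNorm_le_of_bound _ _ (mul_nonneg (by positivity) (euclNorm_nonneg _))
  intro v hv
  rw [_root_.mulVec_sum]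
  simp only [Matrix.smul_mulVec]
  calc euclNorm (∑ p : (Fin n × Fin n) × (Fin n × Fin n), c p • (Dmat p).mulVec v)
      ≤ ∑ p : (Fin n × Fin n) × (Fin n × Fin n), euclNorm (c p • (Dmat p).mulVec v) := euclNorm_sum_le _ _
    _ = ∑ p : (Fin n × Fin n) × (Fin n × Fin n), ‖c p‖ * euclNorm ((Dmat p).mulVec v) := by
        refine Finset.sum_congr rfl fun p _ => euclNorm_smul _ _
    _ ≤ ∑ p : (Fin n × Fin n) × (Fin n × Fin n), ‖c p‖ * 1 := by
        refine Finset.sum_le_sum fun p _ => ?_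
        exact mul_le_mul_of_nonneg_left (le_trans (hperm p v) hv) (norm_nonneg _)
    _ = ∑ p : (Fin n × Fin n) × (Fin n × Fin n), ‖c p‖ := by simp
    _ ≤ 2 * s * euclNorm u := key
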